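/- Two distinct overlapping maximal hourglasses of height two in a graph of maximum degree three intersect in exactly three vertices: if H_1, H_2 are distinct maximal hourglasses with V(H_1) ∩ V(H_2) ≠ ∅ and H_1 has height two, then H_2 has height two and |V(H_1) ∩ V(H_2)| = 3. -/

import Mathlib

/-- The vertex set of an hourglass with layers `(u i, w i)`, `i < h`. -/
def hgSet {V : Type*} (h : ℕ) (u w : ℕ → V) : Set V :=
  {v | ∃ i < h, v = u i ∨ v = w i}

/-- `IsHourglass G h u w`: the vertices `u 0, w 0, …, u (h-1), w (h-1)` induce an
hourglass of height `h` in `G`: consecutive layers are completely cross-linked,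
each layer is linked horizontally, and middle-layer vertices have exactly these
three neighbours inside the hourglass (corner vertices have degree at least two
inside, which is implied). -/
def IsHourglass {V : Type*} (G : SimpleGraph V) (h : ℕ) (u w : ℕ → V) : Prop :=
  2 ≤ h ∧
  Set.InjOn u (Set.Iio h) ∧ Set.InjOn w (Set.Iio h) ∧
  (∀ i < h, ∀ j < h, u i ≠ w j) ∧
  (∀ i < h, G.Adj (u i) (w i)) ∧
  (∀ i, i + 1 < h → G.Adj (u i) (w (i + 1)) ∧ G.Adj (u (i + 1)) (w i)) ∧
  (∀ i, 1 ≤ i → i + 1 < h →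
    (∀ j < h, G.Adj (u i) (w j) → j + 1 = i ∨ j = i ∨ j = i + 1) ∧
    (∀ j < h, ¬ G.Adj (u i) (u j)) ∧
    (∀ j < h, G.Adj (w i) (u j) → j + 1 = i ∨ j = i ∨ j = i + 1) ∧
    (∀ j < h, ¬ G.Adj (w i) (w j)))

/-- A maximal hourglass: no strictly larger vertex set induces an hourglass. -/
def IsMaxHourglass {V : Type*} (G : SimpleGraph V) (h : ℕ) (u w : ℕ → V) : Prop :=
  IsHourglass G h u w ∧
    ¬ ∃ (h' : ℕ) (u' w' : ℕ → V), IsHourglass G h' u' w' ∧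
        hgSet h u w ⊂ hgSet h' u' w'

set_option linter.unusedSectionVars false

section Aux

variable {V : Type*} [Fintype V] {G : SimpleGraph V}

/-- Square: the 4-cycle a-b-c-d with edges ab, ad, cb, cd, all distinct. -/
def Sq (G : SimpleGraph V) (a b c d : V) : Prop :=
  a ≠ b ∧ a ≠ c ∧ a ≠ d ∧ b ≠ c ∧ b ≠ d ∧ c ≠ d ∧
  G.Adj a b ∧ G.Adj a d ∧ G.Adj c b ∧ G.Adj c d

lemma Sq.swap {a b c d : V} (h : Sq G a b c d) : Sq G b a d c := by
  obtain ⟨hab, hac, had, hbc, hbd, hcd, ab, ad, cb, cd⟩ := h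
  exact ⟨hab.symm, hbd, hbc, had, hac, hcd.symm, ab.symm, cb.symm, ad.symm, cd.symm⟩

lemma Sq.rot {a b c d : V} (h : Sq G a b c d) : Sq G c d a b := by
  obtain ⟨hab, hac, had, hbc, hbd, hcd, ab, ad, cb, cd⟩ := h
  exact ⟨hcd, hac.symm, hbc.symm, had.symm, hbd.symm, hab, cd, cb, ad, ab⟩

lemma Sq.flip {a b c d : V} (h : Sq G a b c d) : Sq G a d c b := by
  obtain ⟨hab, hac, had, hbc, hbd, hcd, ab, ad, cb, cd⟩ := h
  exact ⟨had, hac, hab, hcd.symm, hbd.symm, hbc.symm, ad, ab, cd, cb⟩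

lemma no_four [DecidableRel G.Adj] (hdeg : ∀ v : V, G.degree v ≤ 3) {v x1 x2 x3 x4 : V}
    (d12 : x1 ≠ x2) (d13 : x1 ≠ x3) (d14 : x1 ≠ x4) (d23 : x2 ≠ x3) (d24 : x2 ≠ x4)
    (d34 : x3 ≠ x4)
    (a1 : G.Adj v x1) (a2 : G.Adj v x2) (a3 : G.Adj v x3) (a4 : G.Adj v x4) : False := by
  classical
  have hs : ({x1, x2, x3, x4} : Finset V) ⊆ G.neighborFinset v := by
    intro y hy
    rw [SimpleGraph.mem_neighborFinset]
    simp only [Finset.mem_insert, Finset.mem_singleton] at hy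
    rcases hy with rfl | rfl | rfl | rfl <;> assumption
  have h4 : ({x1, x2, x3, x4} : Finset V).card = 4 := by
    rw [Finset.card_insert_of_notMem (by simp [d12, d13, d14]),
      Finset.card_insert_of_notMem (by simp [d23, d24]),
      Finset.card_insert_of_notMem (by simp [d34]), Finset.card_singleton]
  have hle := Finset.card_le_card hs
  rw [h4, SimpleGraph.card_neighborFinset_eq_degree] at hle
  have := hdeg v
  omega

lemma nbrs_eq [DecidableRel G.Adj] (hdeg : ∀ v : V, G.degree v ≤ 3) {v x1 x2 x3 : V}
    (d12 : x1 ≠ x2) (d13 : x1 ≠ x3) (d23 : x2 ≠ x3)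
    (a1 : G.Adj v x1) (a2 : G.Adj v x2) (a3 : G.Adj v x3) :
    ∀ y, G.Adj v y → y = x1 ∨ y = x2 ∨ y = x3 := by
  intro y hy
  by_contra hcon
  push_neg at hcon
  obtain ⟨n1, n2, n3⟩ := hcon
  exact no_four hdeg d12 d13 n1.symm d23 n2.symm n3.symm a1 a2 a3 hy

lemma three_le_ncard {S : Set V} {x y z : V} (hxy : x ≠ y) (hxz : x ≠ z) (hyz : y ≠ z)
    (hx : x ∈ S) (hy : y ∈ S) (hz : z ∈ S) : 3 ≤ S.ncard := by
  have h3 : ({x, y, z} : Set V).ncard = 3 := by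
    rw [Set.ncard_insert_of_notMem (by simp [hxy, hxz]) (Set.toFinite _),
      Set.ncard_insert_of_notMem (by simp [hyz]) (Set.toFinite _), Set.ncard_singleton]
  have hsub : ({x, y, z} : Set V) ⊆ S := by
    rintro t ht
    simp only [Set.mem_insert_iff, Set.mem_singleton_iff] at ht
    rcases ht with rfl | rfl | rfl <;> assumption
  calc 3 = ({x, y, z} : Set V).ncard := h3.symm
    _ ≤ S.ncard := Set.ncard_le_ncard hsub (Set.toFinite S)

lemma ncard_four {a b c d : V} (hab : a ≠ b) (hac : a ≠ c) (had : a ≠ d) (hbc : b ≠ c)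
    (hbd : b ≠ d) (hcd : c ≠ d) : ({a, b, c, d} : Set V).ncard = 4 := by
  rw [Set.ncard_insert_of_notMem (by simp [hab, hac, had]) (Set.toFinite _),
    Set.ncard_insert_of_notMem (by simp [hbc, hbd]) (Set.toFinite _),
    Set.ncard_insert_of_notMem (by simp [hcd]) (Set.toFinite _), Set.ncard_singleton]

lemma five_in_four {a b c d q1 q2 q3 q4 q5 : V}
    (e12 : q1 ≠ q2) (e13 : q1 ≠ q3) (e14 : q1 ≠ q4) (e15 : q1 ≠ q5)
    (e23 : q2 ≠ q3) (e24 : q2 ≠ q4) (e25 : q2 ≠ q5)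
    (e34 : q3 ≠ q4) (e35 : q3 ≠ q5) (e45 : q4 ≠ q5)
    (h1 : q1 = a ∨ q1 = b ∨ q1 = c ∨ q1 = d)
    (h2 : q2 = a ∨ q2 = b ∨ q2 = c ∨ q2 = d)
    (h3 : q3 = a ∨ q3 = b ∨ q3 = c ∨ q3 = d)
    (h4 : q4 = a ∨ q4 = b ∨ q4 = c ∨ q4 = d)
    (h5 : q5 = a ∨ q5 = b ∨ q5 = c ∨ q5 = d) : False := by
  classical
  have hs : ({q1, q2, q3, q4, q5} : Finset V) ⊆ ({a, b, c, d} : Finset V) := by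
    intro y hy
    simp only [Finset.mem_insert, Finset.mem_singleton] at hy ⊢
    rcases hy with rfl | rfl | rfl | rfl | rfl <;> tauto
  have hle := Finset.card_le_card hs
  have h5c : ({q1, q2, q3, q4, q5} : Finset V).card = 5 := by
    rw [Finset.card_insert_of_notMem (by simp [e12, e13, e14, e15]),
      Finset.card_insert_of_notMem (by simp [e23, e24, e25]),
      Finset.card_insert_of_notMem (by simp [e34, e35]),
      Finset.card_insert_of_notMem (by simp [e45]), Finset.card_singleton]
  have g1 := Finset.card_insert_le a ({b, c, d} : Finset V)
  have g2 := Finset.card_insert_le b ({c, d} : Finset V)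
  have g3 := Finset.card_insert_le c ({d} : Finset V)
  have g4 : ({d} : Finset V).card = 1 := Finset.card_singleton d
  omega

lemma mem_hgSet {h : ℕ} {u w : ℕ → V} {v : V} :
    v ∈ hgSet h u w ↔ ∃ i, i < h ∧ (v = u i ∨ v = w i) := Iff.rfl

lemma hgSet_two {u w : ℕ → V} : hgSet 2 u w = {u 0, w 0, u 1, w 1} := by
  ext v
  simp only [hgSet, Set.mem_setOf_eq, Set.mem_insert_iff, Set.mem_singleton_iff]
  constructor
  · rintro ⟨i, hi, hv⟩
    interval_cases i <;> tauto
  · rintro (rfl | rfl | rfl | rfl)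
    exacts [⟨0, by omega, Or.inl rfl⟩, ⟨0, by omega, Or.inr rfl⟩,
      ⟨1, by omega, Or.inl rfl⟩, ⟨1, by omega, Or.inr rfl⟩]

lemma injOn_ne {h : ℕ} {u : ℕ → V} (iu : Set.InjOn u (Set.Iio h)) {i j : ℕ}
    (hi : i < h) (hj : j < h) (hij : i ≠ j) : u i ≠ u j :=
  fun e => hij (iu (Set.mem_Iio.mpr hi) (Set.mem_Iio.mpr hj) e)

lemma IsHourglass.symm {h : ℕ} {u w : ℕ → V} (hg : IsHourglass G h u w) :
    IsHourglass G h w u := by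
  obtain ⟨h2, iu, iw, cross, lay, consec, mid⟩ := hg
  refine ⟨h2, iw, iu, ?_, fun i hi => (lay i hi).symm, ?_, ?_⟩
  · intro i hi j hj
    exact (cross j hj i hi).symm
  · intro i hi
    exact ⟨(consec i hi).2.symm, (consec i hi).1.symm⟩
  · intro i h1 h2'
    obtain ⟨m1, m2, m3, m4⟩ := mid i h1 h2'
    exact ⟨m3, m4, m1, m2⟩

lemma sq_of_hg2 {u w : ℕ → V} (hg : IsHourglass G 2 u w) :
    Sq G (u 0) (w 0) (u 1) (w 1) := by
  obtain ⟨-, iu, iw, cross, lay, consec, -⟩ := hg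
  exact ⟨cross 0 (by omega) 0 (by omega), injOn_ne iu (by omega) (by omega) (by omega),
    cross 0 (by omega) 1 (by omega), (cross 1 (by omega) 0 (by omega)).symm,
    injOn_ne iw (by omega) (by omega) (by omega), cross 1 (by omega) 1 (by omega),
    lay 0 (by omega), (consec 0 (by omega)).1, (consec 0 (by omega)).2, lay 1 (by omega)⟩


lemma IsHourglass.rev {h : ℕ} {u w : ℕ → V} (hg : IsHourglass G h u w) :
    IsHourglass G h (fun i => u (h - 1 - i)) (fun i => w (h - 1 - i)) := by
  obtain ⟨h2, iu, iw, cross, lay, consec, mid⟩ := hg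
  refine ⟨h2, ?_, ?_, ?_, ?_, ?_, ?_⟩
  · intro x hx y hy hxy
    simp only [Set.mem_Iio] at hx hy
    have := iu (Set.mem_Iio.mpr (show h - 1 - x < h by omega))
      (Set.mem_Iio.mpr (show h - 1 - y < h by omega)) hxy
    omega
  · intro x hx y hy hxy
    simp only [Set.mem_Iio] at hx hy
    have := iw (Set.mem_Iio.mpr (show h - 1 - x < h by omega))
      (Set.mem_Iio.mpr (show h - 1 - y < h by omega)) hxy
    omega
  · intro i hi j hj
    exact cross _ (by omega) _ (by omega)
  · intro i hi
    exact lay _ (by omega)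
  · intro i hi
    constructor
    · have e1 : h - 1 - i = (h - 1 - (i + 1)) + 1 := by omega
      have := (consec (h - 1 - (i + 1)) (by omega)).2
      rw [← e1] at this
      exact this
    · have e1 : h - 1 - i = (h - 1 - (i + 1)) + 1 := by omega
      have := (consec (h - 1 - (i + 1)) (by omega)).1
      rw [← e1] at this
      exact this
  · intro i h1 hi1
    obtain ⟨m1, m2, m3, m4⟩ := mid (h - 1 - i) (by omega) (by omega)
    refine ⟨?_, ?_, ?_, ?_⟩
    · intro j hj hadj
      have := m1 (h - 1 - j) (by omega) hadj
      omega
    · intro j hj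
      exact m2 (h - 1 - j) (by omega)
    · intro j hj hadj
      have := m3 (h - 1 - j) (by omega) hadj
      omega
    · intro j hj
      exact m4 (h - 1 - j) (by omega)

lemma extendA [DecidableRel G.Adj] (hdeg : ∀ v : V, G.degree v ≤ 3) {u₁ w₁ : ℕ → V}
    (hmax : IsMaxHourglass G 2 u₁ w₁) {a b c d α β : V}
    (hset : hgSet 2 u₁ w₁ = {a, b, c, d})
    (hsq : Sq G a b c d)
    (hαa : α ≠ a) (hαb : α ≠ b) (hαc : α ≠ c) (hαd : α ≠ d)
    (hβa : β ≠ a) (hβb : β ≠ b) (hβc : β ≠ c) (hβd : β ≠ d)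
    (hαβ : α ≠ β)
    (aαβ : G.Adj α β) (haβ : G.Adj a β) (hbα : G.Adj b α)
    (Na : ∀ y, G.Adj a y → y = b ∨ y = d ∨ y = β)
    (Nb : ∀ y, G.Adj b y → y = a ∨ y = c ∨ y = α) : False := by
  obtain ⟨hab, hac, had, hbc, hbd, hcd, Aab, Aad, Acb, Acd⟩ := hsq
  have hαb' : G.Adj α b := hbα.symm
  have hba : b ≠ a := hab.symm
  have hca : c ≠ a := hac.symm
  have hcb : c ≠ b := hbc.symm
  have hda : d ≠ a := had.symm
  have hdb : d ≠ b := hbd.symm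
  have hdc : d ≠ c := hcd.symm
  have haα : a ≠ α := hαa.symm
  have hbα' : b ≠ α := hαb.symm
  have hcα : c ≠ α := hαc.symm
  have hdα : d ≠ α := hαd.symm
  have haβ' : a ≠ β := hβa.symm
  have hbβ : b ≠ β := hβb.symm
  have hcβ : c ≠ β := hβc.symm
  have hdβ : d ≠ β := hβd.symm
  have hβα : β ≠ α := hαβ.symm
  apply hmax.2
  refine ⟨3, (fun i => if i = 0 then c else if i = 1 then a else α),
    (fun i => if i = 0 then d else if i = 1 then b else β),
    ⟨by omega, ?_, ?_, ?_, ?_, ?_, ?_⟩, ?_⟩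
  · intro x hx y hy e
    simp only [Set.mem_Iio] at hx hy
    interval_cases x <;> interval_cases y <;> simp_all
  · intro x hx y hy e
    simp only [Set.mem_Iio] at hx hy
    interval_cases x <;> interval_cases y <;> simp_all
  · intro i hi j hj
    interval_cases i <;> interval_cases j <;> simp_all
  · intro i hi
    interval_cases i <;> simp_all
  · intro i hi
    have : i = 0 ∨ i = 1 := by omega
    rcases this with rfl | rfl <;> constructor <;> simp_all
  · intro i h1 h2
    have : i = 1 := by omega
    subst this
    refine ⟨fun j hj _ => by omega, ?_, fun j hj _ => by omega, ?_⟩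
    · intro j hj hadj
      interval_cases j <;> simp only [reduceIte] at hadj
      · rcases Na c hadj with e | e | e
        exacts [hbc e.symm, hcd e, hβc e.symm]
      · exact G.loopless.irrefl a hadj
      · rcases Na α hadj with e | e | e
        exacts [hαb e, hαd e, hαβ e]
    · intro j hj hadj
      interval_cases j <;> simp only [reduceIte] at hadj
      · rcases Nb d hadj with e | e | e
        exacts [had e.symm, hcd e.symm, hαd e.symm]
      · exact G.loopless.irrefl b hadj
      · rcases Nb β hadj with e | e | e
        exacts [hβa e, hβc e, hαβ e.symm]
  · rw [hset, Set.ssubset_def]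
    constructor
    · intro x hx
      simp only [Set.mem_insert_iff, Set.mem_singleton_iff] at hx
      rcases hx with rfl | rfl | rfl | rfl
      · exact ⟨1, by omega, Or.inl (by norm_num)⟩
      · exact ⟨1, by omega, Or.inr (by norm_num)⟩
      · exact ⟨0, by omega, Or.inl (by norm_num)⟩
      · exact ⟨0, by omega, Or.inr (by norm_num)⟩
    · intro hsub
      have hm : α ∈ ({a, b, c, d} : Set V) := hsub ⟨2, by omega, Or.inl (by norm_num)⟩
      simp only [Set.mem_insert_iff, Set.mem_singleton_iff] at hm
      rcases hm with e | e | e | e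
      exacts [hαa e, hαb e, hαc e, hαd e]

/-- If all four vertices of the height-2 maximal hourglass lie in an hourglass of
height ≥ 3, we contradict maximality. -/
lemma subsetB_false [DecidableRel G.Adj] {u₁ w₁ : ℕ → V}
    (hmax : IsMaxHourglass G 2 u₁ w₁) {a b c d : V}
    (hset : hgSet 2 u₁ w₁ = {a, b, c, d})
    {h₂ : ℕ} {u₂ w₂ : ℕ → V} (hg₂ : IsHourglass G h₂ u₂ w₂) (h3 : 3 ≤ h₂)
    (haB : a ∈ hgSet h₂ u₂ w₂) (hbB : b ∈ hgSet h₂ u₂ w₂)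
    (hcB : c ∈ hgSet h₂ u₂ w₂) (hdB : d ∈ hgSet h₂ u₂ w₂) : False := by
  obtain ⟨-, iu, iw, cross, -, -, -⟩ := id hg₂
  apply hmax.2
  refine ⟨h₂, u₂, w₂, hg₂, ?_⟩
  rw [hset, Set.ssubset_def]
  constructor
  · intro x hx
    simp only [Set.mem_insert_iff, Set.mem_singleton_iff] at hx
    rcases hx with rfl | rfl | rfl | rfl <;> assumption
  · intro hsub
    have m1 : u₂ 0 ∈ ({a, b, c, d} : Set V) := hsub ⟨0, by omega, Or.inl rfl⟩
    have m2 : u₂ 1 ∈ ({a, b, c, d} : Set V) := hsub ⟨1, by omega, Or.inl rfl⟩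
    have m3 : u₂ 2 ∈ ({a, b, c, d} : Set V) := hsub ⟨2, by omega, Or.inl rfl⟩
    have m4 : w₂ 0 ∈ ({a, b, c, d} : Set V) := hsub ⟨0, by omega, Or.inr rfl⟩
    have m5 : w₂ 1 ∈ ({a, b, c, d} : Set V) := hsub ⟨1, by omega, Or.inr rfl⟩
    simp only [Set.mem_insert_iff, Set.mem_singleton_iff] at m1 m2 m3 m4 m5
    exact five_in_four (a := a) (b := b) (c := c) (d := d)
      (injOn_ne iu (by omega) (by omega) (by omega))
      (injOn_ne iu (by omega) (by omega) (by omega))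
      (cross 0 (by omega) 0 (by omega)) (cross 0 (by omega) 1 (by omega))
      (injOn_ne iu (by omega) (by omega) (by omega))
      (cross 1 (by omega) 0 (by omega)) (cross 1 (by omega) 1 (by omega))
      (cross 2 (by omega) 0 (by omega)) (cross 2 (by omega) 1 (by omega))
      (injOn_ne iw (by omega) (by omega) (by omega))
      m1 m2 m3 m4 m5

lemma lemMfinal [DecidableRel G.Adj] (hdeg : ∀ v : V, G.degree v ≤ 3) {u₁ w₁ : ℕ → V}
    (hmax : IsMaxHourglass G 2 u₁ w₁) {a b c d : V}
    (hset : hgSet 2 u₁ w₁ = {a, b, c, d}) (hsq : Sq G a b c d)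
    {u₂ w₂ : ℕ → V} (hg₂ : IsHourglass G 3 u₂ w₂)
    (hva : u₂ 1 = a) (hvb : b = w₂ 0) (hvd : d = w₂ 2)
    (hcB : ∀ k, k < 3 → c ≠ u₂ k ∧ c ≠ w₂ k) : False := by
  obtain ⟨hab, hac, had, hbc, hbd, hcd, Aab, Aad, Acb, Acd⟩ := hsq
  obtain ⟨-, iu, iw, cross, lay, consec, -⟩ := hg₂
  -- neighbours of a = u₂ 1
  have aw0 : G.Adj a (w₂ 0) := by rw [← hva]; exact (consec 0 (by omega)).2
  have aw1 : G.Adj a (w₂ 1) := by rw [← hva]; exact lay 1 (by omega)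
  have aw2 : G.Adj a (w₂ 2) := by rw [← hva]; exact (consec 1 (by omega)).1
  have Na' := nbrs_eq hdeg (injOn_ne iw (by omega) (by omega) (by omega))
    (injOn_ne iw (by omega) (by omega) (by omega))
    (injOn_ne iw (by omega) (by omega) (by omega)) aw0 aw1 aw2
  have Na : ∀ y, G.Adj a y → y = b ∨ y = d ∨ y = w₂ 1 := by
    intro y hy
    rcases Na' y hy with e | e | e
    · exact Or.inl (e.trans hvb.symm)
    · exact Or.inr (Or.inr e)
    · exact Or.inr (Or.inl (e.trans hvd.symm))
  -- neighbours of b = w₂ 0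
  have bu1 : G.Adj b a := Aab.symm
  have bc : G.Adj b c := Acb.symm
  have bu0 : G.Adj b (u₂ 0) := by rw [hvb]; exact (lay 0 (by omega)).symm
  have hau0 : a ≠ u₂ 0 := by rw [← hva]; exact injOn_ne iu (by omega) (by omega) (by omega)
  have Nb := nbrs_eq hdeg hac hau0 (hcB 0 (by omega)).1 bu1 bc bu0
  exact extendA hdeg hmax hset ⟨hab, hac, had, hbc, hbd, hcd, Aab, Aad, Acb, Acd⟩
    (α := u₂ 0) (β := w₂ 1)
    hau0.symm (by rw [hvb]; exact cross 0 (by omega) 0 (by omega))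
    (hcB 0 (by omega)).1.symm (by rw [hvd]; exact cross 0 (by omega) 2 (by omega))
    (by rw [← hva]; exact (cross 1 (by omega) 1 (by omega)).symm)
    (by rw [hvb]; exact injOn_ne iw (by omega) (by omega) (by omega))
    (hcB 1 (by omega)).2.symm
    (by rw [hvd]; exact injOn_ne iw (by omega) (by omega) (by omega))
    (cross 0 (by omega) 1 (by omega))
    ((consec 0 (by omega)).1) aw1 bu0 Na Nb

lemma lemMcore [DecidableRel G.Adj] (hdeg : ∀ v : V, G.degree v ≤ 3) {u₁ w₁ : ℕ → V}
    (hmax : IsMaxHourglass G 2 u₁ w₁) {a b c d : V}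
    (hset : hgSet 2 u₁ w₁ = {a, b, c, d}) (hsq : Sq G a b c d)
    {h₂ : ℕ} {u₂ w₂ : ℕ → V} (hg₂ : IsHourglass G h₂ u₂ w₂) {i : ℕ}
    (h1 : 1 ≤ i) (h2 : i + 1 < h₂) (hva : u₂ i = a) : False := by
  obtain ⟨hab, hac, had, hbc, hbd, hcd, Aab, Aad, Acb, Acd⟩ := hsq
  obtain ⟨-, iu, iw, cross, lay, consec, mid⟩ := hg₂
  have hg₂' : IsHourglass G h₂ u₂ w₂ := ⟨by omega, iu, iw, cross, lay, consec, mid⟩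
  have aw0 : G.Adj a (w₂ (i - 1)) := by
    rw [← hva]
    have e : i - 1 + 1 = i := by omega
    have := (consec (i - 1) (by omega)).2
    rw [e] at this
    exact this
  have aw1 : G.Adj a (w₂ i) := by rw [← hva]; exact lay i (by omega)
  have aw2 : G.Adj a (w₂ (i + 1)) := by rw [← hva]; exact (consec i (by omega)).1
  have Na' := nbrs_eq hdeg (injOn_ne iw (by omega) (by omega) (by omega))
    (injOn_ne iw (by omega) (by omega) (by omega))
    (injOn_ne iw (by omega) (by omega) (by omega)) aw0 aw1 aw2
  have hb : ∃ jb, jb < h₂ ∧ (jb = i - 1 ∨ jb = i ∨ jb = i + 1) ∧ b = w₂ jb := by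
    rcases Na' b Aab with e | e | e
    exacts [⟨i - 1, by omega, by omega, e⟩, ⟨i, by omega, by omega, e⟩,
      ⟨i + 1, by omega, by omega, e⟩]
  have hd : ∃ jd, jd < h₂ ∧ (jd = i - 1 ∨ jd = i ∨ jd = i + 1) ∧ d = w₂ jd := by
    rcases Na' d Aad with e | e | e
    exacts [⟨i - 1, by omega, by omega, e⟩, ⟨i, by omega, by omega, e⟩,
      ⟨i + 1, by omega, by omega, e⟩]
  obtain ⟨jb, hjb, hjbs, hbe⟩ := hb
  obtain ⟨jd, hjd, hjds, hde⟩ := hd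
  have hcB : ∀ k, k < h₂ → c ≠ u₂ k ∧ c ≠ w₂ k := by
    intro k hk
    constructor <;> intro e <;>
      exact subsetB_false hmax hset hg₂' (by omega)
        ⟨i, by omega, Or.inl hva.symm⟩ ⟨jb, hjb, Or.inr hbe⟩
        ⟨k, hk, by tauto⟩ ⟨jd, hjd, Or.inr hde⟩
  -- b is a corner of H₂
  have hjbc : jb = 0 ∨ jb = h₂ - 1 := by
    by_contra hmid
    push_neg at hmid
    have hb1 : 1 ≤ jb := by omega
    have hb2 : jb + 1 < h₂ := by omega
    have bu0 : G.Adj b (u₂ (jb - 1)) := by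
      rw [hbe]
      have e : jb - 1 + 1 = jb := by omega
      have := (consec (jb - 1) (by omega)).1
      rw [e] at this
      exact this.symm
    have bu1 : G.Adj b (u₂ jb) := by rw [hbe]; exact (lay jb (by omega)).symm
    have bu2 : G.Adj b (u₂ (jb + 1)) := by rw [hbe]; exact (consec jb (by omega)).2.symm
    have Nb' := nbrs_eq hdeg (injOn_ne iu (by omega) (by omega) (by omega))
      (injOn_ne iu (by omega) (by omega) (by omega))
      (injOn_ne iu (by omega) (by omega) (by omega)) bu0 bu1 bu2
    rcases Nb' c Acb.symm with e | e | e
    exacts [(hcB _ (by omega)).1 e, (hcB _ (by omega)).1 e, (hcB _ (by omega)).1 e]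
  have hjdc : jd = 0 ∨ jd = h₂ - 1 := by
    by_contra hmid
    push_neg at hmid
    have hd1 : 1 ≤ jd := by omega
    have hd2 : jd + 1 < h₂ := by omega
    have du0 : G.Adj d (u₂ (jd - 1)) := by
      rw [hde]
      have e : jd - 1 + 1 = jd := by omega
      have := (consec (jd - 1) (by omega)).1
      rw [e] at this
      exact this.symm
    have du1 : G.Adj d (u₂ jd) := by rw [hde]; exact (lay jd (by omega)).symm
    have du2 : G.Adj d (u₂ (jd + 1)) := by rw [hde]; exact (consec jd (by omega)).2.symm
    have Nd' := nbrs_eq hdeg (injOn_ne iu (by omega) (by omega) (by omega))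
      (injOn_ne iu (by omega) (by omega) (by omega))
      (injOn_ne iu (by omega) (by omega) (by omega)) du0 du1 du2
    rcases Nd' c Acd.symm with e | e | e
    exacts [(hcB _ (by omega)).1 e, (hcB _ (by omega)).1 e, (hcB _ (by omega)).1 e]
  have hjbjd : jb ≠ jd := by
    intro e
    apply hbd
    rw [hbe, hde, e]
  have key : i = 1 ∧ h₂ = 3 ∧ ((jb = 0 ∧ jd = 2) ∨ (jb = 2 ∧ jd = 0)) := by omega
  obtain ⟨hi1, hh3, hcase⟩ := key
  subst hi1 hh3
  rcases hcase with ⟨e1, e2⟩ | ⟨e1, e2⟩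
  · subst e1 e2
    exact lemMfinal hdeg hmax hset ⟨hab, hac, had, hbc, hbd, hcd, Aab, Aad, Acb, Acd⟩
      hg₂' hva hbe hde hcB
  · subst e1 e2
    exact lemMfinal hdeg hmax
      (hset.trans (by ext x; simp only [Set.mem_insert_iff, Set.mem_singleton_iff]; tauto))
      ⟨had, hac, hab, hcd.symm, hbd.symm, hbc.symm, Aad, Aab, Acd, Acb⟩
      hg₂' hva hde hbe hcB

lemma lemM [DecidableRel G.Adj] (hdeg : ∀ v : V, G.degree v ≤ 3) {u₁ w₁ : ℕ → V}
    (hmax : IsMaxHourglass G 2 u₁ w₁) {a b c d : V}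
    (hset : hgSet 2 u₁ w₁ = {a, b, c, d}) (hsq : Sq G a b c d)
    {h₂ : ℕ} {u₂ w₂ : ℕ → V} (hg₂ : IsHourglass G h₂ u₂ w₂) {i : ℕ}
    (h1 : 1 ≤ i) (h2 : i + 1 < h₂)
    (hvA : u₂ i = a ∨ u₂ i = b ∨ u₂ i = c ∨ u₂ i = d) : False := by
  rcases hvA with hv | hv | hv | hv
  · exact lemMcore hdeg hmax hset hsq hg₂ h1 h2 hv
  · exact lemMcore hdeg hmax
      (hset.trans (by ext x; simp only [Set.mem_insert_iff, Set.mem_singleton_iff]; tauto))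
      hsq.swap hg₂ h1 h2 hv
  · exact lemMcore hdeg hmax
      (hset.trans (by ext x; simp only [Set.mem_insert_iff, Set.mem_singleton_iff]; tauto))
      hsq.rot hg₂ h1 h2 hv
  · exact lemMcore hdeg hmax
      (hset.trans (by ext x; simp only [Set.mem_insert_iff, Set.mem_singleton_iff]; tauto))
      hsq.swap.rot hg₂ h1 h2 hv

lemma lemCfinal [DecidableRel G.Adj] (hdeg : ∀ v : V, G.degree v ≤ 3) {u₁ w₁ : ℕ → V}
    (hmax : IsMaxHourglass G 2 u₁ w₁) {a b c d : V}
    (hset : hgSet 2 u₁ w₁ = {a, b, c, d}) (hsq : Sq G a b c d)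
    {h₂ : ℕ} {u₂ w₂ : ℕ → V} (hg₂ : IsHourglass G h₂ u₂ w₂) (h3 : 3 ≤ h₂)
    (hva : u₂ 0 = a) (hvb : w₂ 0 = b)
    (hw1 : w₂ 1 ≠ a ∧ w₂ 1 ≠ b ∧ w₂ 1 ≠ c ∧ w₂ 1 ≠ d) : False := by
  by_cases hu1A : u₂ 1 = a ∨ u₂ 1 = b ∨ u₂ 1 = c ∨ u₂ 1 = d
  · exact lemM hdeg hmax hset hsq hg₂ (by omega) (by omega) hu1A
  push_neg at hu1A
  obtain ⟨hu1a, hu1b, hu1c, hu1d⟩ := hu1A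
  obtain ⟨hw1a, hw1b, hw1c, hw1d⟩ := hw1
  obtain ⟨hab, hac, had, hbc, hbd, hcd, Aab, Aad, Acb, Acd⟩ := hsq
  obtain ⟨-, iu, iw, cross, lay, consec, -⟩ := id hg₂
  have aw1 : G.Adj a (w₂ 1) := by rw [← hva]; exact (consec 0 (by omega)).1
  have Na := nbrs_eq hdeg hbd hw1b.symm hw1d.symm Aab Aad aw1
  have Na' : ∀ y, G.Adj a y → y = b ∨ y = d ∨ y = w₂ 1 := by
    intro y hy
    rcases Na y hy with e | e | e <;> tauto
  have bu1 : G.Adj b (u₂ 1) := by rw [← hvb]; exact (consec 0 (by omega)).2.symm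
  have hau1 : a ≠ u₂ 1 := by
    rw [← hva]
    exact injOn_ne iu (show (0:ℕ) < h₂ by omega) (show (1:ℕ) < h₂ by omega) (by omega)
  have Nb := nbrs_eq hdeg hac hau1 hu1c.symm Aab.symm Acb.symm bu1
  exact extendA hdeg hmax hset ⟨hab, hac, had, hbc, hbd, hcd, Aab, Aad, Acb, Acd⟩
    (α := u₂ 1) (β := w₂ 1)
    hu1a hu1b hu1c hu1d hw1a hw1b hw1c hw1d
    (cross 1 (by omega) 1 (by omega))
    (lay 1 (by omega)) aw1 bu1 Na' Nb

lemma lemCcore [DecidableRel G.Adj] (hdeg : ∀ v : V, G.degree v ≤ 3) {u₁ w₁ : ℕ → V}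
    (hmax : IsMaxHourglass G 2 u₁ w₁) {a b c d : V}
    (hset : hgSet 2 u₁ w₁ = {a, b, c, d}) (hsq : Sq G a b c d)
    {h₂ : ℕ} {u₂ w₂ : ℕ → V} (hg₂ : IsHourglass G h₂ u₂ w₂) (h3 : 3 ≤ h₂)
    (hva : u₂ 0 = a) : False := by
  by_cases hw1A : w₂ 1 = a ∨ w₂ 1 = b ∨ w₂ 1 = c ∨ w₂ 1 = d
  · exact lemM hdeg hmax hset hsq hg₂.symm (by omega) (by omega) hw1A
  push_neg at hw1A
  obtain ⟨hw1a, hw1b, hw1c, hw1d⟩ := hw1A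
  obtain ⟨hab, hac, had, hbc, hbd, hcd, Aab, Aad, Acb, Acd⟩ := id hsq
  obtain ⟨-, iu, iw, cross, lay, consec, -⟩ := id hg₂
  have aw0 : G.Adj a (w₂ 0) := by rw [← hva]; exact lay 0 (by omega)
  have aw1 : G.Adj a (w₂ 1) := by rw [← hva]; exact (consec 0 (by omega)).1
  have hw0A : w₂ 0 = a ∨ w₂ 0 = b ∨ w₂ 0 = c ∨ w₂ 0 = d := by
    by_contra hcon
    push_neg at hcon
    obtain ⟨h0a, h0b, h0c, h0d⟩ := hcon
    exact no_four hdeg hbd h0b.symm hw1b.symm h0d.symm hw1d.symm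
      (injOn_ne iw (by omega) (by omega) (by omega)) Aab Aad aw0 aw1
  rcases hw0A with e | e | e | e
  · exact (cross 0 (by omega) 0 (by omega)) (hva.trans e.symm)
  · exact lemCfinal hdeg hmax hset hsq hg₂ h3 hva e ⟨hw1a, hw1b, hw1c, hw1d⟩
  · exact no_four hdeg hbd hbc hw1b.symm hcd.symm hw1d.symm hw1c.symm
      Aab Aad (by rw [e] at aw0; exact aw0) aw1
  · exact lemCfinal hdeg hmax
      (hset.trans (by ext x; simp only [Set.mem_insert_iff, Set.mem_singleton_iff]; tauto))
      hsq.flip hg₂ h3 hva e ⟨hw1a, hw1d, hw1c, hw1b⟩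

set_option maxHeartbeats 2000000 in
lemma MAIN3u [DecidableRel G.Adj] (hdeg : ∀ v : V, G.degree v ≤ 3) {u₁ w₁ : ℕ → V}
    (hmax : IsMaxHourglass G 2 u₁ w₁) {a b c d : V}
    (hset : hgSet 2 u₁ w₁ = {a, b, c, d}) (hsq : Sq G a b c d)
    {h₂ : ℕ} {u₂ w₂ : ℕ → V} (hg₂ : IsHourglass G h₂ u₂ w₂) (h3 : 3 ≤ h₂)
    {i : ℕ} (hi : i < h₂)
    (hvA : u₂ i = a ∨ u₂ i = b ∨ u₂ i = c ∨ u₂ i = d) : False := by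
  -- reduce to a = u₂ i case using lemM for middle, lemCcore for corners
  by_cases hmid : 1 ≤ i ∧ i + 1 < h₂
  · exact lemM hdeg hmax hset hsq hg₂ hmid.1 hmid.2 hvA
  have : i = 0 ∨ i = h₂ - 1 := by omega
  rcases this with rfl | rfl
  · rcases hvA with hv | hv | hv | hv
    · exact lemCcore hdeg hmax hset hsq hg₂ h3 hv
    · exact lemCcore hdeg hmax
        (hset.trans (by ext x; simp only [Set.mem_insert_iff, Set.mem_singleton_iff]; tauto))
        hsq.swap hg₂ h3 hv
    · exact lemCcore hdeg hmax
        (hset.trans (by ext x; simp only [Set.mem_insert_iff, Set.mem_singleton_iff]; tauto))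
        hsq.rot hg₂ h3 hv
    · exact lemCcore hdeg hmax
        (hset.trans (by ext x; simp only [Set.mem_insert_iff, Set.mem_singleton_iff]; tauto))
        hsq.swap.rot hg₂ h3 hv
  · have hg' := hg₂.rev
    have hv' : (fun k => u₂ (h₂ - 1 - k)) 0 = a ∨ (fun k => u₂ (h₂ - 1 - k)) 0 = b ∨
        (fun k => u₂ (h₂ - 1 - k)) 0 = c ∨ (fun k => u₂ (h₂ - 1 - k)) 0 = d := by
      simpa using hvA
    rcases hv' with hv | hv | hv | hv
    · exact lemCcore hdeg hmax hset hsq hg' h3 hv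
    · exact lemCcore hdeg hmax
        (hset.trans (by ext x; simp only [Set.mem_insert_iff, Set.mem_singleton_iff]; tauto))
        hsq.swap hg' h3 hv
    · exact lemCcore hdeg hmax
        (hset.trans (by ext x; simp only [Set.mem_insert_iff, Set.mem_singleton_iff]; tauto))
        hsq.rot hg' h3 hv
    · exact lemCcore hdeg hmax
        (hset.trans (by ext x; simp only [Set.mem_insert_iff, Set.mem_singleton_iff]; tauto))
        hsq.swap.rot hg' h3 hv

lemma EMfinal [DecidableRel G.Adj] (hdeg : ∀ v : V, G.degree v ≤ 3) {u₁ w₁ : ℕ → V}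
    (hmax : IsMaxHourglass G 2 u₁ w₁) {a b c d r s : V}
    (hset : hgSet 2 u₁ w₁ = {a, b, c, d}) (hsq : Sq G a b c d)
    (hsqB : Sq G a b r s)
    (hsA : s ≠ a ∧ s ≠ b ∧ s ≠ c ∧ s ≠ d)
    (hc2 : (({a, b, c, d} : Set V) ∩ {a, b, r, s}).ncard ≤ 2) : False := by
  obtain ⟨hab, hac, had, hbc, hbd, hcd, Aab, Aad, Acb, Acd⟩ := id hsq
  obtain ⟨-, har, has, hbr, hbs, hrs, -, Aas, Arb, Ars⟩ := id hsqB
  obtain ⟨hsa, hsb, hsc, hsd⟩ := hsA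
  have hrA : ¬(r = a ∨ r = b ∨ r = c ∨ r = d) := by
    rintro (e | e | e | e)
    · exact har e.symm
    · exact hbr e.symm
    · -- r ∈ A ∩ B together with a, b gives three common vertices
      have h3 : 3 ≤ (({a, b, c, d} : Set V) ∩ {a, b, r, s}).ncard :=
        three_le_ncard hab har hbr
          ⟨by simp, by simp⟩ ⟨by simp, by simp⟩ ⟨by simp [e], by simp⟩
      omega
    · have h3 : 3 ≤ (({a, b, c, d} : Set V) ∩ {a, b, r, s}).ncard :=
        three_le_ncard hab har hbr
          ⟨by simp, by simp⟩ ⟨by simp, by simp⟩ ⟨by simp [e], by simp⟩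
      omega
  push_neg at hrA
  obtain ⟨hra, hrb, hrc, hrd⟩ := hrA
  have Na := nbrs_eq hdeg hbd hsb.symm hsd.symm Aab Aad Aas
  have Nb := nbrs_eq hdeg hac hra.symm hrc.symm Aab.symm Acb.symm Arb.symm
  exact extendA hdeg hmax hset hsq (α := r) (β := s)
    hra hrb hrc hrd hsa hsb hsc hsd hrs Ars Aas Arb.symm Na Nb


lemma seteq4 {a b c d a' b' c' d' : V}
    (h : ∀ x : V, (x = a ∨ x = b ∨ x = c ∨ x = d) ↔ (x = a' ∨ x = b' ∨ x = c' ∨ x = d')) :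
    ({a, b, c, d} : Set V) = {a', b', c', d'} := by
  ext x
  simp only [Set.mem_insert_iff, Set.mem_singleton_iff]
  exact h x

lemma ncard_le_perm {S T S' T' : Set V} (h1 : S = S') (h2 : T = T')
    (h : (S ∩ T).ncard ≤ 2) : (S' ∩ T').ncard ≤ 2 := by rw [← h1, ← h2]; exact h

lemma EGmain [DecidableRel G.Adj] (hdeg : ∀ v : V, G.degree v ≤ 3) {u₁ w₁ : ℕ → V}
    (hmax : IsMaxHourglass G 2 u₁ w₁) {a b c d q r s : V}
    (hset : hgSet 2 u₁ w₁ = {a, b, c, d}) (hsq : Sq G a b c d)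
    (hsqB : Sq G a q r s)
    (hqA : q = a ∨ q = b ∨ q = c ∨ q = d)
    (hsA : ¬(s = a ∨ s = b ∨ s = c ∨ s = d))
    (hc2 : (({a, b, c, d} : Set V) ∩ {a, q, r, s}).ncard ≤ 2) : False := by
  push_neg at hsA
  obtain ⟨hsa, hsb, hsc, hsd⟩ := hsA
  obtain ⟨hab, hac, had, hbc, hbd, hcd, Aab, Aad, Acb, Acd⟩ := id hsq
  obtain ⟨haq, har, has, hqr, hqs, hrs, Aaq, Aas, Arq, Ars⟩ := id hsqB
  rcases hqA with e | e | e | e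
  · exact haq e.symm
  · exact EMfinal hdeg hmax hset hsq (e ▸ hsqB) ⟨hsa, hsb, hsc, hsd⟩
      (ncard_le_perm rfl (by rw [e]) hc2)
  · exact no_four hdeg hbd hbc hsb.symm hcd.symm hsd.symm hsc.symm Aab Aad
      (by rw [← e]; exact Aaq) Aas
  · exact EMfinal hdeg hmax
      (hset.trans (seteq4 (by tauto)))
      hsq.flip (e ▸ hsqB) ⟨hsa, hsd, hsc, hsb⟩
      (ncard_le_perm (seteq4 (by tauto)) (by rw [e]) hc2)

lemma EGcore [DecidableRel G.Adj] (hdeg : ∀ v : V, G.degree v ≤ 3) {u₁ w₁ : ℕ → V}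
    (hmax : IsMaxHourglass G 2 u₁ w₁) {a b c d q r s : V}
    (hset : hgSet 2 u₁ w₁ = {a, b, c, d}) (hsq : Sq G a b c d)
    (hsqB : Sq G a q r s)
    (hc2 : (({a, b, c, d} : Set V) ∩ {a, q, r, s}).ncard ≤ 2) : False := by
  obtain ⟨hab, hac, had, hbc, hbd, hcd, Aab, Aad, Acb, Acd⟩ := id hsq
  obtain ⟨haq, har, has, hqr, hqs, hrs, Aaq, Aas, Arq, Ars⟩ := id hsqB
  by_cases hqA : q = a ∨ q = b ∨ q = c ∨ q = d
  · by_cases hsA : s = a ∨ s = b ∨ s = c ∨ s = d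
    · have hqmem : q ∈ ({a, b, c, d} : Set V) := by
        simp only [Set.mem_insert_iff, Set.mem_singleton_iff]; exact hqA
      have hsmem : s ∈ ({a, b, c, d} : Set V) := by
        simp only [Set.mem_insert_iff, Set.mem_singleton_iff]; exact hsA
      have h3 : 3 ≤ (({a, b, c, d} : Set V) ∩ {a, q, r, s}).ncard :=
        three_le_ncard haq has hqs
          ⟨by simp, by simp⟩ ⟨hqmem, by simp⟩ ⟨hsmem, by simp⟩
      omega
    · exact EGmain hdeg hmax hset hsq hsqB hqA hsA hc2
  · by_cases hsA : s = a ∨ s = b ∨ s = c ∨ s = d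
    · exact EGmain hdeg hmax hset hsq hsqB.flip hsA hqA
        (ncard_le_perm rfl (seteq4 (by tauto)) hc2)
    · push_neg at hqA hsA
      exact no_four hdeg hbd hqA.2.1.symm hsA.2.1.symm hqA.2.2.2.symm hsA.2.2.2.symm
        hqs Aab Aad Aaq Aas


lemma EGstepB [DecidableRel G.Adj] (hdeg : ∀ v : V, G.degree v ≤ 3) {u₁ w₁ : ℕ → V}
    (hmax : IsMaxHourglass G 2 u₁ w₁) {a b c d p q r s : V}
    (hset : hgSet 2 u₁ w₁ = {a, b, c, d}) (hsq : Sq G a b c d) (hsqB : Sq G p q r s)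
    (hc2 : (({a, b, c, d} : Set V) ∩ {p, q, r, s}).ncard ≤ 2)
    (hvB : a = p ∨ a = q ∨ a = r ∨ a = s) : False := by
  rcases hvB with e | e | e | e
  · exact EGcore hdeg hmax hset hsq (by rw [e]; exact hsqB)
      (ncard_le_perm rfl (by rw [e]) hc2)
  · exact EGcore hdeg hmax hset hsq (by rw [e]; exact hsqB.swap)
      (ncard_le_perm rfl (by rw [e]; exact seteq4 (by tauto)) hc2)
  · exact EGcore hdeg hmax hset hsq (by rw [e]; exact hsqB.rot)
      (ncard_le_perm rfl (by rw [e]; exact seteq4 (by tauto)) hc2)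
  · exact EGcore hdeg hmax hset hsq (by rw [e]; exact hsqB.swap.rot)
      (ncard_le_perm rfl (by rw [e]; exact seteq4 (by tauto)) hc2)

set_option maxHeartbeats 1000000 in
lemma EG [DecidableRel G.Adj] (hdeg : ∀ v : V, G.degree v ≤ 3) {u₁ w₁ : ℕ → V}
    (hmax : IsMaxHourglass G 2 u₁ w₁) {a b c d p q r s : V}
    (hset : hgSet 2 u₁ w₁ = {a, b, c, d}) (hsq : Sq G a b c d) (hsqB : Sq G p q r s)
    (hne' : ({a, b, c, d} : Set V) ≠ {p, q, r, s})
    (hInter' : (({a, b, c, d} : Set V) ∩ {p, q, r, s}).Nonempty) :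
    (({a, b, c, d} : Set V) ∩ {p, q, r, s}).ncard = 3 := by
  obtain ⟨hab, hac, had, hbc, hbd, hcd, Aab, Aad, Acb, Acd⟩ := id hsq
  obtain ⟨hpq, hpr, hps, hqr, hqs, hrs, Apq, Aps, Arq, Ars⟩ := id hsqB
  have hupper : (({a, b, c, d} : Set V) ∩ {p, q, r, s}).ncard < 4 := by
    have hAne : ({a, b, c, d} : Set V) ∩ {p, q, r, s} ≠ {a, b, c, d} := by
      intro e
      have hsub : ({a, b, c, d} : Set V) ⊆ {p, q, r, s} := by
        intro x hx
        rw [← e] at hx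
        exact hx.2
      have heq : ({a, b, c, d} : Set V) = {p, q, r, s} :=
        Set.eq_of_subset_of_ncard_le hsub
          (by rw [ncard_four hpq hpr hps hqr hqs hrs, ncard_four hab hac had hbc hbd hcd])
          (Set.toFinite _)
      exact hne' heq
    have hssub : ({a, b, c, d} : Set V) ∩ {p, q, r, s} ⊂ {a, b, c, d} :=
      Set.ssubset_iff_subset_ne.mpr ⟨Set.inter_subset_left, hAne⟩
    have := Set.ncard_lt_ncard hssub (Set.toFinite _)
    rw [ncard_four hab hac had hbc hbd hcd] at this
    exact this
  by_contra hne3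
  have hc2 : (({a, b, c, d} : Set V) ∩ {p, q, r, s}).ncard ≤ 2 := by omega
  obtain ⟨v, hvA, hvB⟩ := hInter'
  simp only [Set.mem_insert_iff, Set.mem_singleton_iff] at hvA hvB
  rcases hvA with rfl | rfl | rfl | rfl
  · exact EGstepB hdeg hmax hset hsq hsqB hc2 hvB
  · exact EGstepB hdeg hmax (hset.trans (seteq4 (by tauto))) hsq.swap hsqB
      (ncard_le_perm (seteq4 (by tauto)) rfl hc2) hvB
  · exact EGstepB hdeg hmax (hset.trans (seteq4 (by tauto))) hsq.rot hsqB
      (ncard_le_perm (seteq4 (by tauto)) rfl hc2) hvB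
  · exact EGstepB hdeg hmax (hset.trans (seteq4 (by tauto))) hsq.swap.rot hsqB
      (ncard_le_perm (seteq4 (by tauto)) rfl hc2) hvB

end Aux

/-- two distinct overlapping maximal hourglasses, one of which has
height two, in a graph of maximum degree three, both have height two and
intersect in exactly three vertices. -/
theorem stmt_15 {V : Type*} [Fintype V] (G : SimpleGraph V) [DecidableRel G.Adj]
    (hdeg : ∀ v : V, G.degree v ≤ 3)
    (h₂ : ℕ) (u₁ w₁ u₂ w₂ : ℕ → V)
    (hH₁ : IsMaxHourglass G 2 u₁ w₁) (hH₂ : IsMaxHourglass G h₂ u₂ w₂)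
    (hne : hgSet 2 u₁ w₁ ≠ hgSet h₂ u₂ w₂)
    (hInter : (hgSet 2 u₁ w₁ ∩ hgSet h₂ u₂ w₂).Nonempty) :
    h₂ = 2 ∧ (hgSet 2 u₁ w₁ ∩ hgSet h₂ u₂ w₂).ncard = 3 := by
  have hsq := sq_of_hg2 hH₁.1
  have hset : hgSet 2 u₁ w₁ = {u₁ 0, w₁ 0, u₁ 1, w₁ 1} := hgSet_two
  have h2le : 2 ≤ h₂ := hH₂.1.1
  have hh2 : h₂ = 2 := by
    by_contra hne2
    have h3 : 3 ≤ h₂ := by omega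
    obtain ⟨x, hxA, hxB⟩ := hInter
    rw [hset] at hxA
    simp only [Set.mem_insert_iff, Set.mem_singleton_iff] at hxA
    obtain ⟨i, hi, hx2⟩ := hxB
    rcases hx2 with rfl | rfl
    · exact MAIN3u hdeg hH₁ hset hsq hH₂.1 h3 hi hxA
    · exact MAIN3u hdeg hH₁ hset hsq hH₂.1.symm h3 hi hxA
  subst hh2
  have hsqB := sq_of_hg2 hH₂.1
  have hsetB : hgSet 2 u₂ w₂ = {u₂ 0, w₂ 0, u₂ 1, w₂ 1} := hgSet_two
  refine ⟨rfl, ?_⟩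
  rw [hset, hsetB]
  exact EG hdeg hH₁ hset hsq hsqB (by rw [← hset, ← hsetB]; exact hne)
    (by rw [← hset, ← hsetB]; exact hInter)
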